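/- Let (M_n) be a sequence of nonzero d×d matrices with nonnegative real entries. The following are equivalent: (a) there exist a fixed column vector c ∈ ℝ^d and row vectors r_n such that M_n/‖M_n‖ − c·r_n tends to 0 as n → ∞; (b) there exists a vector L ∈ ℝ^d such that for every column vector v with all entries positive, M_n v/‖M_n v‖ tends to L as n → ∞ (in particular the limit is independent of v). Moreover, in this situation L is collinear to the vector c of (a). -/

import Mathlib

open Filter Matrix

/-- `‖X‖`: sum of the absolute values of the entries of a real matrix. -/
noncomputable def matEntrySumNorm {d : ℕ} (M : Matrix (Fin d) (Fin d) ℝ) : ℝ :=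
  ∑ i, ∑ j, |M i j|

/-- `‖v‖`: sum of the absolute values of the entries of a real vector. -/
noncomputable def vecEntrySumNorm {d : ℕ} (v : Fin d → ℝ) : ℝ :=
  ∑ i, |v i|

namespace RankOneAux
variable {d : ℕ}

lemma matNorm_pos {M : Matrix (Fin d) (Fin d) ℝ} (hM : M ≠ 0) :
    0 < matEntrySumNorm M := by
  obtain ⟨i, j, hij⟩ : ∃ i j, M i j ≠ 0 := by
    by_contra h
    push_neg at h
    exact hM (Matrix.ext fun i j => h i j)
  have h1 : 0 < |M i j| := abs_pos.mpr hij
  have h2 : |M i j| ≤ ∑ j', |M i j'| :=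
    Finset.single_le_sum (f := fun j' => |M i j'|) (fun j' _ => abs_nonneg _) (Finset.mem_univ j)
  have h3 : (∑ j', |M i j'|) ≤ ∑ i', ∑ j', |M i' j'| :=
    Finset.single_le_sum (f := fun i' => ∑ j', |M i' j'|)
      (fun i' _ => Finset.sum_nonneg fun j' _ => abs_nonneg _) (Finset.mem_univ i)
  unfold matEntrySumNorm
  linarith

lemma normSum_one {M : Matrix (Fin d) (Fin d) ℝ} (hM : M ≠ 0) (hMpos : ∀ i j, 0 ≤ M i j) :
    ∑ i, ∑ j, ((matEntrySumNorm M)⁻¹ • M) i j = 1 := by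
  have h : ∑ i, ∑ j, ((matEntrySumNorm M)⁻¹ • M) i j
      = (matEntrySumNorm M)⁻¹ * ∑ i, ∑ j, M i j := by
    simp [Matrix.smul_apply, smul_eq_mul, Finset.mul_sum]
  rw [h]
  have h2 : ∑ i, ∑ j, M i j = matEntrySumNorm M := by
    unfold matEntrySumNorm
    exact Finset.sum_congr rfl fun i _ => Finset.sum_congr rfl fun j _ =>
      (abs_of_nonneg (hMpos i j)).symm
  rw [h2, inv_mul_cancel₀ (matNorm_pos hM).ne']

lemma mulVec_apply (M : Matrix (Fin d) (Fin d) ℝ) (v : Fin d → ℝ) (i : Fin d) :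
    (M *ᵥ v) i = ∑ j, M i j * v j := by
  rw [Matrix.mulVec, dotProduct]

lemma normEq {M : Matrix (Fin d) (Fin d) ℝ} (hM : M ≠ 0) (hMpos : ∀ i j, 0 ≤ M i j)
    (v : Fin d → ℝ) (hv : ∀ i, 0 ≤ v i) :
    (vecEntrySumNorm (M *ᵥ v))⁻¹ • (M *ᵥ v)
      = (∑ i, (((matEntrySumNorm M)⁻¹ • M) *ᵥ v) i)⁻¹ • (((matEntrySumNorm M)⁻¹ • M) *ᵥ v) := by
  set k : ℝ := (matEntrySumNorm M)⁻¹ with hk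
  have hkpos : 0 < k := inv_pos.mpr (matNorm_pos hM)
  have hAv : ((k • M) *ᵥ v) = k • (M *ᵥ v) := Matrix.smul_mulVec k M v
  have hMv : ∀ i, 0 ≤ (M *ᵥ v) i := by
    intro i
    rw [Matrix.mulVec, dotProduct]
    exact Finset.sum_nonneg fun j _ => mul_nonneg (hMpos i j) (hv j)
  have hsum : ∑ i, ((k • M) *ᵥ v) i = k * ∑ i, (M *ᵥ v) i := by
    rw [hAv]; simp [Finset.mul_sum]
  have hnorm : vecEntrySumNorm (M *ᵥ v) = ∑ i, (M *ᵥ v) i := by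
    unfold vecEntrySumNorm
    exact Finset.sum_congr rfl fun i _ => abs_of_nonneg (hMv i)
  rw [hsum, hnorm, hAv]
  funext i
  set x : ℝ := ∑ i, (M *ᵥ v) i
  show x⁻¹ * (M *ᵥ v) i = (k * x)⁻¹ * (k * (M *ᵥ v) i)
  calc x⁻¹ * (M *ᵥ v) i = (k⁻¹ * k) * (x⁻¹ * (M *ᵥ v) i) := by
        rw [inv_mul_cancel₀ hkpos.ne', one_mul]
    _ = (k * x)⁻¹ * (k * (M *ᵥ v) i) := by rw [mul_inv]; ring

lemma bdd_mul_null {f g : ℕ → ℝ} {C : ℝ} (hf : ∀ n, |f n| ≤ C)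
    (hg : Tendsto g atTop (nhds 0)) : Tendsto (fun n => f n * g n) atTop (nhds 0) := by
  apply squeeze_zero_norm (a := fun n => C * |g n|)
  · intro n
    rw [Real.norm_eq_abs, abs_mul]
    exact mul_le_mul_of_nonneg_right (hf n) (abs_nonneg _)
  · have : Tendsto (fun n => |g n|) atTop (nhds 0) := by simpa using hg.abs
    simpa using this.const_mul C

lemma key (M : ℕ → Matrix (Fin d) (Fin d) ℝ) (hM : ∀ n, M n ≠ 0)
    (hMpos : ∀ n i j, 0 ≤ M n i j) (c : Fin d → ℝ) (r : ℕ → Fin d → ℝ)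
    (hc : Tendsto (fun n => (matEntrySumNorm (M n))⁻¹ • M n - vecMulVec c (r n))
      atTop (nhds 0)) :
    ∀ v : Fin d → ℝ, (∀ i, 0 < v i) →
      Tendsto (fun n => (vecEntrySumNorm (M n *ᵥ v))⁻¹ • (M n *ᵥ v)) atTop
        (nhds ((∑ i, c i)⁻¹ • c)) := by
  set A : ℕ → Matrix (Fin d) (Fin d) ℝ := fun n => (matEntrySumNorm (M n))⁻¹ • M n with hA
  have hA0 : ∀ n i j, 0 ≤ A n i j := fun n i j =>
    mul_nonneg (inv_nonneg.mpr (matNorm_pos (hM n)).le) (hMpos n i j)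
  have hA1 : ∀ n, ∑ i, ∑ j, A n i j = 1 := fun n => normSum_one (hM n) (hMpos n)
  -- entrywise convergence
  have hE : ∀ i j, Tendsto (fun n => A n i j - c i * r n j) atTop (nhds 0) := by
    intro i j
    replace hc := tendsto_pi_nhds.mp hc
    have := hc i
    rw [tendsto_pi_nhds] at this
    have h2 := this j
    simpa [hA, Matrix.sub_apply, Matrix.vecMulVec_apply] using h2
  set S : ℝ := ∑ i, c i with hSdef
  -- step 1 : S * ρ n → 1
  have hSρ : Tendsto (fun n => S * ∑ j, r n j) atTop (nhds 1) := by
    have h1 : Tendsto (fun n => ∑ i, ∑ j, (A n i j - c i * r n j)) atTop (nhds 0) := by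
      have := tendsto_finset_sum (Finset.univ : Finset (Fin d))
        (fun i _ => tendsto_finset_sum (Finset.univ : Finset (Fin d)) (fun j _ => hE i j))
      simpa using this
    have h2 : ∀ n, ∑ i, ∑ j, (A n i j - c i * r n j) = 1 - S * ∑ j, r n j := by
      intro n
      simp only [Finset.sum_sub_distrib, hA1 n, ← Finset.mul_sum, ← Finset.sum_mul, hSdef]
    have h3 : Tendsto (fun n => 1 - (1 - S * ∑ j, r n j)) atTop (nhds (1 - 0)) := by
      refine tendsto_const_nhds.sub ?_
      exact h1.congr fun n => h2 n
    simpa using h3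
  have hS : S ≠ 0 := by
    intro h
    rw [h] at hSρ
    simp only [zero_mul] at hSρ
    have := tendsto_nhds_unique hSρ tendsto_const_nhds
    norm_num at this
  -- the positive vector
  intro v hv
  rcases Nat.eq_zero_or_pos d with hd | hd
  · subst hd
    exact absurd (Matrix.ext fun i _ => i.elim0) (hM 0)
  obtain ⟨j0, -, hj0⟩ := Finset.exists_min_image (Finset.univ : Finset (Fin d)) v
    ⟨⟨0, hd⟩, Finset.mem_univ _⟩
  set m : ℝ := v j0 with hm
  have hm0 : 0 < m := hv j0
  have hmle : ∀ j, m ≤ v j := fun j => hj0 j (Finset.mem_univ j)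
  set w : ℕ → ℝ := fun n => ∑ i, ∑ j, A n i j * v j with hwdef
  set σ : ℕ → ℝ := fun n => ∑ j, r n j * v j with hσdef
  have hwge : ∀ n, m ≤ w n := by
    intro n
    have h1 : ∑ i, ∑ j, A n i j * m ≤ w n := by
      refine Finset.sum_le_sum fun i _ => Finset.sum_le_sum fun j _ => ?_
      exact mul_le_mul_of_nonneg_left (hmle j) (hA0 n i j)
    have h2 : ∑ i, ∑ j, A n i j * m = m := by
      simp only [← Finset.sum_mul, hA1 n, one_mul]
    linarith
  have hwpos : ∀ n, 0 < w n := fun n => lt_of_lt_of_le hm0 (hwge n)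
  have hwinv : ∀ n, |(w n)⁻¹| ≤ m⁻¹ := by
    intro n
    rw [abs_of_pos (inv_pos.mpr (hwpos n))]
    exact inv_anti₀ hm0 (hwge n)
  have hδ : Tendsto (fun n => w n - S * σ n) atTop (nhds 0) := by
    have h1 : Tendsto (fun n => ∑ i, ∑ j, (A n i j - c i * r n j) * v j) atTop (nhds 0) := by
      have := tendsto_finset_sum (Finset.univ : Finset (Fin d))
        (fun i _ => tendsto_finset_sum (Finset.univ : Finset (Fin d))
          (fun j _ => (hE i j).mul_const (v j)))
      simpa using this
    refine h1.congr fun n => ?_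
    simp only [sub_mul, Finset.sum_sub_distrib, mul_assoc, ← Finset.mul_sum,
      ← Finset.sum_mul, hwdef, hσdef, hSdef]
  have hEv : ∀ i, Tendsto (fun n => (∑ j, A n i j * v j) - c i * σ n) atTop (nhds 0) := by
    intro i
    have h1 : Tendsto (fun n => ∑ j, (A n i j - c i * r n j) * v j) atTop (nhds 0) := by
      have := tendsto_finset_sum (Finset.univ : Finset (Fin d))
        (fun j _ => (hE i j).mul_const (v j))
      simpa using this
    refine h1.congr fun n => ?_
    simp only [sub_mul, Finset.sum_sub_distrib, mul_assoc, ← Finset.mul_sum, hσdef]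
  have hδw : Tendsto (fun n => (w n)⁻¹ * (w n - S * σ n)) atTop (nhds 0) :=
    bdd_mul_null hwinv hδ
  have hσw : Tendsto (fun n => (w n)⁻¹ * σ n) atTop (nhds S⁻¹) := by
    have h1 : Tendsto (fun n => S⁻¹ * (1 - (w n)⁻¹ * (w n - S * σ n))) atTop
        (nhds (S⁻¹ * (1 - 0))) := tendsto_const_nhds.mul (tendsto_const_nhds.sub hδw)
    have h2 : ∀ n, S⁻¹ * (1 - (w n)⁻¹ * (w n - S * σ n)) = (w n)⁻¹ * σ n := by
      intro n
      have hwne : w n ≠ 0 := (hwpos n).ne'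
      field_simp
      ring
    simpa [h2] using h1.congr h2
  have hew : ∀ i, Tendsto (fun n => (w n)⁻¹ * ((∑ j, A n i j * v j) - c i * σ n)) atTop
      (nhds 0) := fun i => bdd_mul_null hwinv (hEv i)
  have hfin : ∀ i, Tendsto (fun n => (w n)⁻¹ * (∑ j, A n i j * v j)) atTop
      (nhds (S⁻¹ * c i)) := by
    intro i
    have h1 : Tendsto (fun n => c i * ((w n)⁻¹ * σ n)
        + (w n)⁻¹ * ((∑ j, A n i j * v j) - c i * σ n)) atTop (nhds (c i * S⁻¹ + 0)) :=
      (hσw.const_mul (c i)).add (hew i)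
    have h2 : ∀ n, c i * ((w n)⁻¹ * σ n) + (w n)⁻¹ * ((∑ j, A n i j * v j) - c i * σ n)
        = (w n)⁻¹ * (∑ j, A n i j * v j) := fun n => by ring
    have h3 := h1.congr h2
    simpa [mul_comm] using h3
  -- assemble
  have heq : ∀ n, (vecEntrySumNorm (M n *ᵥ v))⁻¹ • (M n *ᵥ v) = (w n)⁻¹ • (A n *ᵥ v) := by
    intro n
    rw [normEq (hM n) (hMpos n) v (fun i => (hv i).le)]
    have hsum : ∑ i, (A n *ᵥ v) i = w n := by
      exact Finset.sum_congr rfl fun i _ => mulVec_apply (A n) v i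
    rw [← hA] at *
    rw [hsum]
  rw [show (fun n => (vecEntrySumNorm (M n *ᵥ v))⁻¹ • (M n *ᵥ v))
      = fun n => (w n)⁻¹ • (A n *ᵥ v) from funext heq]
  rw [tendsto_pi_nhds]
  intro i
  have : ∀ n, ((w n)⁻¹ • (A n *ᵥ v)) i = (w n)⁻¹ * (∑ j, A n i j * v j) := by
    intro n
    rw [Pi.smul_apply, smul_eq_mul, mulVec_apply]
  rw [show (fun n => ((w n)⁻¹ • (A n *ᵥ v)) i) = fun n => (w n)⁻¹ * (∑ j, A n i j * v j)
    from funext this]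
  have : ((∑ i, c i)⁻¹ • c) i = S⁻¹ * c i := by rw [Pi.smul_apply, smul_eq_mul, hSdef]
  rw [this]
  exact hfin i

lemma back (M : ℕ → Matrix (Fin d) (Fin d) ℝ) (hM : ∀ n, M n ≠ 0)
    (hMpos : ∀ n i j, 0 ≤ M n i j) (L : Fin d → ℝ)
    (hL : ∀ v : Fin d → ℝ, (∀ i, 0 < v i) →
      Tendsto (fun n => (vecEntrySumNorm (M n *ᵥ v))⁻¹ • (M n *ᵥ v)) atTop (nhds L)) :
    Tendsto (fun n => (matEntrySumNorm (M n))⁻¹ • M n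
      - vecMulVec L (fun j => ∑ i, ((matEntrySumNorm (M n))⁻¹ • M n) i j))
      atTop (nhds 0) := by
  set A : ℕ → Matrix (Fin d) (Fin d) ℝ := fun n => (matEntrySumNorm (M n))⁻¹ • M n with hA
  have hA0 : ∀ n i j, 0 ≤ A n i j := fun n i j =>
    mul_nonneg (inv_nonneg.mpr (matNorm_pos (hM n)).le) (hMpos n i j)
  have hA1 : ∀ n, ∑ i, ∑ j, A n i j = 1 := fun n => normSum_one (hM n) (hMpos n)
  set s : ℕ → Fin d → ℝ := fun n j => ∑ i, A n i j with hs
  have hs0 : ∀ n j, 0 ≤ s n j := fun n j => Finset.sum_nonneg fun i _ => hA0 n i j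
  have hs1 : ∀ n j, s n j ≤ 1 := by
    intro n j
    rw [← hA1 n]
    refine Finset.sum_le_sum fun i _ => ?_
    exact Finset.single_le_sum (f := fun j' => A n i j') (fun j' _ => hA0 n i j')
      (Finset.mem_univ j)
  -- reformulated hypothesis
  have hL' : ∀ v : Fin d → ℝ, (∀ i, 0 < v i) → ∀ i,
      Tendsto (fun n => (∑ i', ∑ j, A n i' j * v j)⁻¹ * (∑ j, A n i j * v j)) atTop
        (nhds (L i)) := by
    intro v hv i
    have h1 := hL v hv
    have heq : ∀ n, (vecEntrySumNorm (M n *ᵥ v))⁻¹ • (M n *ᵥ v)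
        = (∑ i', ∑ j, A n i' j * v j)⁻¹ • (A n *ᵥ v) := by
      intro n
      rw [normEq (hM n) (hMpos n) v (fun i => (hv i).le)]
      rw [show ((matEntrySumNorm (M n))⁻¹ • M n) = A n from rfl]
      have : ∑ i', (A n *ᵥ v) i' = ∑ i', ∑ j, A n i' j * v j :=
        Finset.sum_congr rfl fun i' _ => mulVec_apply (A n) v i'
      rw [this]
    rw [show (fun n => (vecEntrySumNorm (M n *ᵥ v))⁻¹ • (M n *ᵥ v))
        = fun n => (∑ i', ∑ j, A n i' j * v j)⁻¹ • (A n *ᵥ v) from funext heq] at h1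
    rw [tendsto_pi_nhds] at h1
    have h2 := h1 i
    simpa [mulVec_apply] using h2
  -- v = ones
  have hone : ∀ i, Tendsto (fun n => ∑ j, A n i j) atTop (nhds (L i)) := by
    intro i
    have h1 := hL' (fun _ => 1) (fun _ => one_pos) i
    simpa [hA1] using h1
  -- v = ones + e_j
  have hplus : ∀ i j, Tendsto
      (fun n => (1 + s n j)⁻¹ * ((∑ j', A n i j') + A n i j)) atTop (nhds (L i)) := by
    intro i j
    have hvpos : ∀ j', (0:ℝ) < 1 + (if j' = j then 1 else 0) := by
      intro j'; split <;> norm_num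
    have h1 := hL' (fun j' => 1 + if j' = j then 1 else 0) hvpos i
    have e1 : ∀ n i', ∑ j', A n i' j' * (1 + if j' = j then 1 else 0)
        = (∑ j', A n i' j') + A n i' j := by
      intro n i'
      simp [mul_add, Finset.sum_add_distrib, mul_ite, Finset.sum_ite_eq']
    have e2 : ∀ n, ∑ i', ∑ j', A n i' j' * (1 + if j' = j then 1 else 0)
        = 1 + s n j := by
      intro n
      simp only [e1]
      rw [Finset.sum_add_distrib, hA1 n, hs]
    rw [show (fun n => (∑ i', ∑ j', A n i' j' * (1 + if j' = j then 1 else 0))⁻¹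
        * (∑ j', A n i j' * (1 + if j' = j then 1 else 0)))
        = fun n => (1 + s n j)⁻¹ * ((∑ j', A n i j') + A n i j) from
        funext fun n => by rw [e2 n, e1 n i]] at h1
    exact h1
  -- per entry convergence to zero
  have hEntry : ∀ i j, Tendsto (fun n => A n i j - L i * s n j) atTop (nhds 0) := by
    intro i j
    have hnull : Tendsto (fun n => (1 + s n j)⁻¹ * ((∑ j', A n i j') + A n i j) - L i)
        atTop (nhds 0) := by
      have := (hplus i j).sub (tendsto_const_nhds (x := L i))
      simpa using this
    have hXnull : Tendsto (fun n => ((∑ j', A n i j') + A n i j) - (1 + s n j) * L i)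
        atTop (nhds 0) := by
      have hb : ∀ n, |1 + s n j| ≤ 2 := by
        intro n
        rw [abs_of_pos (by linarith [hs0 n j])]
        linarith [hs1 n j]
      have h1 := bdd_mul_null hb hnull
      refine h1.congr fun n => ?_
      have hne : (1 : ℝ) + s n j ≠ 0 := by linarith [hs0 n j]
      field_simp
    have honeN : Tendsto (fun n => (∑ j', A n i j') - L i) atTop (nhds 0) := by
      have := (hone i).sub (tendsto_const_nhds (x := L i))
      simpa using this
    have := hXnull.sub honeN
    simp only [sub_zero] at this
    refine this.congr fun n => ?_
    ring
  -- assemble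
  refine tendsto_pi_nhds.mpr fun i => ?_
  rw [tendsto_pi_nhds]
  intro j
  have : ∀ n, (A n - vecMulVec L (fun j' => ∑ i', A n i' j')) i j
      = A n i j - L i * s n j := by
    intro n
    rw [Matrix.sub_apply, Matrix.vecMulVec_apply, hs]
  simpa [this, hA, hs, Matrix.vecMulVec_apply] using hEntry i j


end RankOneAux

open RankOneAux in
/-- for a sequence of nonzero nonnegative `d × d` real matrices,
`M n / ‖M n‖ - c ⬝ r_n → 0` for a *fixed* column vector `c` iff the normalized images
`M n v / ‖M n v‖` of every positive vector `v` converge to a limit `L` independent of `v`;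
moreover `L` is collinear to `c`. -/
theorem rank_one_approx_const_col_iff_normalized_image_converges {d : ℕ}
    (M : ℕ → Matrix (Fin d) (Fin d) ℝ)
    (hM : ∀ n, M n ≠ 0) (hMpos : ∀ n i j, 0 ≤ M n i j) :
    ((∃ c : Fin d → ℝ, ∃ r : ℕ → Fin d → ℝ,
        Tendsto (fun n => (matEntrySumNorm (M n))⁻¹ • M n - vecMulVec c (r n))
          atTop (nhds 0))
      ↔ (∃ L : Fin d → ℝ, ∀ v : Fin d → ℝ, (∀ i, 0 < v i) →
          Tendsto (fun n => (vecEntrySumNorm (M n *ᵥ v))⁻¹ • (M n *ᵥ v))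
            atTop (nhds L)))
    ∧ ∀ c : Fin d → ℝ, ∀ r : ℕ → Fin d → ℝ, ∀ L : Fin d → ℝ,
        Tendsto (fun n => (matEntrySumNorm (M n))⁻¹ • M n - vecMulVec c (r n))
          atTop (nhds 0) →
        (∀ v : Fin d → ℝ, (∀ i, 0 < v i) →
          Tendsto (fun n => (vecEntrySumNorm (M n *ᵥ v))⁻¹ • (M n *ᵥ v))
            atTop (nhds L)) →
        ∃ t : ℝ, L = t • c := by
  constructor
  · constructor
    · rintro ⟨c, r, hc⟩
      exact ⟨(∑ i, c i)⁻¹ • c, key M hM hMpos c r hc⟩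
    · rintro ⟨L, hL⟩
      exact ⟨L, fun n j => ∑ i, ((matEntrySumNorm (M n))⁻¹ • M n) i j,
        back M hM hMpos L hL⟩
  · intro c r L hc hL
    refine ⟨(∑ i, c i)⁻¹, ?_⟩
    have h1 := key M hM hMpos c r hc (fun _ => 1) (fun _ => one_pos)
    have h2 := hL (fun _ => 1) (fun _ => one_pos)
    exact tendsto_nhds_unique h2 h1
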